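/- Under Assumptions A with ε_m < ε_M, let (δ_n) be a sequence of natural numbers with A_n < δ_n < B_n for all n ≥ N₀ (some N₀), and suppose δ_n/n → δ with ε_m < δ < ε_M. Then lim_{n→∞} (1/n)·log p_n(δ_n) = log 𝒫(δ). -/

import Mathlib

open Filter Set

private lemma aux_floor_div (δ : ℝ) (hδ : 0 ≤ δ) (u : ℕ → ℕ) (β : ℝ)
    (hu : Tendsto (fun n : ℕ => (u n : ℝ) / n) atTop (nhds β)) :
    Tendsto (fun n : ℕ => (⌊δ * (u n : ℝ)⌋₊ : ℝ) / n) atTop (nhds (δ * β)) := by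
  have h2 : Tendsto (fun n : ℕ => δ * ((u n : ℝ) / n)) atTop (nhds (δ * β)) :=
    hu.const_mul δ
  have h1 : Tendsto (fun n : ℕ => δ * ((u n : ℝ) / n) - 1 / n) atTop (nhds (δ * β)) := by
    have := h2.sub tendsto_one_div_atTop_nhds_zero_nat
    simpa using this
  refine tendsto_of_tendsto_of_tendsto_of_le_of_le' h1 h2 ?_ ?_
  · filter_upwards [eventually_ge_atTop 1] with n hn
    have hn' : (0:ℝ) < n := by exact_mod_cast hn
    have hfl : δ * (u n : ℝ) < ⌊δ * (u n : ℝ)⌋₊ + 1 := Nat.lt_floor_add_one _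
    have heq : δ * ((u n : ℝ) / n) - 1 / n = (δ * (u n : ℝ) - 1) / n := by
      field_simp
    rw [heq]
    gcongr
    linarith
  · filter_upwards [eventually_ge_atTop 1] with n hn
    have hn' : (0:ℝ) < n := by exact_mod_cast hn
    rw [← mul_div_assoc]
    gcongr
    exact Nat.floor_le (by positivity)

private lemma aux_ceil_div (α : ℝ) (hα : 0 ≤ α) :
    Tendsto (fun n : ℕ => (⌈α * (n : ℝ)⌉₊ : ℝ) / n) atTop (nhds α) := by
  have h2 : Tendsto (fun n : ℕ => α + 1 / (n : ℝ)) atTop (nhds α) := by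
    have := (tendsto_const_nhds (x := α) (f := atTop (α := ℕ))).add
      tendsto_one_div_atTop_nhds_zero_nat
    simpa using this
  refine tendsto_of_tendsto_of_tendsto_of_le_of_le' tendsto_const_nhds h2 ?_ ?_
  · filter_upwards [eventually_ge_atTop 1] with n hn
    have hn' : (0:ℝ) < n := by exact_mod_cast hn
    have hle : α * (n : ℝ) ≤ ⌈α * (n : ℝ)⌉₊ := Nat.le_ceil _
    rw [le_div_iff₀ hn']
    linarith
  · filter_upwards [eventually_ge_atTop 1] with n hn
    have hn' : (0:ℝ) < n := by exact_mod_cast hn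
    have hlt : (⌈α * (n : ℝ)⌉₊ : ℝ) < α * n + 1 := Nat.ceil_lt_add_one (by positivity)
    rw [div_le_iff₀ hn']
    have : (α + 1 / (n:ℝ)) * n = α * n + 1 := by field_simp
    rw [this]
    linarith

/-- Under Assumptions A with `ε_m < ε_M`, if `(δ_n)` is a sequence of naturals
with `A_n < δ_n < B_n` eventually and `δ_n/n → δ ∈ (ε_m, ε_M)`, then
`lim (1/n) log p n δ_n = log 𝒫(δ)`. -/
theorem theorem_3_6
    (p : ℕ → ℕ → ℕ) (A B : ℕ → ℕ) (K C : ℝ)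
    (hK : 0 < K) (hpK : ∀ n, 1 ≤ n → ∀ m, (p n m : ℝ) ≤ K ^ n)
    (hC : 0 < C)
    (hABle : ∀ n, 1 ≤ n → A n ≤ B n)
    (hBC : ∀ n, 1 ≤ n → (B n : ℝ) ≤ C * n)
    (hpos : ∀ n, 1 ≤ n → ∀ m, A n ≤ m → m ≤ B n → 0 < p n m)
    (hzero : ∀ n, 1 ≤ n → ∀ m, (m < A n ∨ B n < m) → p n m = 0)
    (hsuper : ∀ n₁ n₂, 1 ≤ n₁ → 1 ≤ n₂ → ∀ m₁ m₂,
      p n₁ m₁ * p n₂ m₂ ≤ p (n₁ + n₂) (m₁ + m₂))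
    (εm εM : ℝ)
    (hεm : Tendsto (fun n : ℕ => (A n : ℝ) / n) atTop (nhds εm))
    (hεM : Tendsto (fun n : ℕ => (B n : ℝ) / n) atTop (nhds εM))
    (hlt : εm < εM)
    (logP : ℝ → ℝ)
    (hP : ∀ ε ∈ Set.Ioo εm εM,
      Tendsto (fun n : ℕ => Real.log (p n ⌊ε * n⌋₊) / n) atTop (nhds (logP ε)))
    (δseq : ℕ → ℕ) (N₀ : ℕ)
    (hδseq : ∀ n, N₀ ≤ n → A n < δseq n ∧ δseq n < B n)
    (δ : ℝ) (hδ : δ ∈ Set.Ioo εm εM)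
    (htend : Tendsto (fun n : ℕ => (δseq n : ℝ) / n) atTop (nhds δ)) :
    Tendsto (fun n : ℕ => Real.log (p n (δseq n)) / n) atTop (nhds (logP δ)) := by
  obtain ⟨hmδ, hδM⟩ := hδ
  set L := logP δ with hLdef
  set f : ℕ → ℝ := fun n => Real.log (p n (δseq n)) / n with hfdef
  set a : ℕ → ℝ := fun N => Real.log (p N ⌊δ * (N : ℝ)⌋₊) / N with hadef
  have ha : Tendsto a atTop (nhds L) := hP δ ⟨hmδ, hδM⟩
  have hεm0 : 0 ≤ εm := ge_of_tendsto' hεm (fun n => by positivity)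
  have hδ0 : 0 < δ := lt_of_le_of_lt hεm0 hmδ
  -- positivity of p n (δseq n), eventual bounds on f
  have hpδ : ∀ n, 1 ≤ n → N₀ ≤ n → 1 ≤ p n (δseq n) := by
    intro n h1 h2
    obtain ⟨hA', hB'⟩ := hδseq n h2
    exact hpos n h1 _ hA'.le hB'.le
  have hf0 : ∀ᶠ n in atTop, 0 ≤ f n := by
    filter_upwards [eventually_ge_atTop 1, eventually_ge_atTop N₀] with n h1 h2
    have hp1 : (1:ℝ) ≤ p n (δseq n) := by exact_mod_cast hpδ n h1 h2
    have := Real.log_nonneg hp1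
    positivity
  have hfK : ∀ᶠ n in atTop, f n ≤ Real.log K := by
    filter_upwards [eventually_ge_atTop 1, eventually_ge_atTop N₀] with n h1 h2
    have hn' : (0:ℝ) < n := by exact_mod_cast h1
    have hp1 : (1:ℝ) ≤ p n (δseq n) := by exact_mod_cast hpδ n h1 h2
    have hlog : Real.log (p n (δseq n)) ≤ Real.log (K ^ n) :=
      Real.log_le_log (by linarith) (hpK n h1 _)
    rw [Real.log_pow] at hlog
    rw [hfdef]
    rw [div_le_iff₀ hn']
    calc Real.log (p n (δseq n)) ≤ n * Real.log K := hlog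
      _ = Real.log K * n := by ring
  -- the base floor limit : ⌊δ N⌋/N → δ
  have hid : Tendsto (fun n : ℕ => ((n:ℕ) : ℝ) / n) atTop (nhds 1) := by
    refine Tendsto.congr' ?_ (tendsto_const_nhds (x := (1:ℝ)))
    filter_upwards [eventually_ge_atTop 1] with n hn
    have hn' : (0:ℝ) < n := by exact_mod_cast hn
    field_simp
  have hfloorbase : Tendsto (fun N : ℕ => (⌊δ * (N : ℝ)⌋₊ : ℝ) / N) atTop (nhds δ) := by
    have := aux_floor_div δ hδ0.le (fun n => n) 1 hid
    simpa using this
  -- key bounds for each α ∈ (0, 1/2)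
  have key : ∀ α : ℝ, 0 < α → α < 1/2 →
      limsup f atTop ≤ (1+α)*L ∧ (1-α)*L ≤ liminf f atTop := by
    intro α hα0 hα2
    set k : ℕ → ℕ := fun n => ⌈α * (n : ℝ)⌉₊ with hkdef
    have hk1 : ∀ n : ℕ, 1 ≤ n → 1 ≤ k n := by
      intro n hn
      have hn' : (0:ℝ) < n := by exact_mod_cast hn
      exact Nat.one_le_iff_ne_zero.mpr (by
        have : 0 < k n := Nat.ceil_pos.mpr (by positivity)
        omega)
    have hkn : ∀ n : ℕ, k n ≤ n := by
      intro n
      refine Nat.ceil_le.mpr ?_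
      have : (0:ℝ) ≤ n := by positivity
      nlinarith
    have hkdiv : Tendsto (fun n : ℕ => (k n : ℝ) / n) atTop (nhds α) := aux_ceil_div α hα0.le
    have hkTop : Tendsto k atTop atTop := by
      rw [← tendsto_natCast_atTop_iff (R := ℝ)]
      exact tendsto_atTop_mono' atTop
        (Eventually.of_forall (fun n => Nat.le_ceil (α * (n:ℝ))))
        ((tendsto_natCast_atTop_atTop (R := ℝ)).const_mul_atTop hα0)
    -- ===================== UPPER BOUND =====================
    have hNk : Tendsto (fun n : ℕ => (((n + k n : ℕ)) : ℝ) / n) atTop (nhds (1 + α)) := by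
      refine Tendsto.congr' ?_ (hid.add hkdiv)
      filter_upwards [eventually_ge_atTop 1] with n hn
      have hn' : (0:ℝ) < n := by exact_mod_cast hn
      push_cast
      ring
    have hNkTop : Tendsto (fun n : ℕ => n + k n) atTop atTop :=
      tendsto_atTop_mono (fun n => Nat.le_add_right n (k n)) tendsto_id
    have hfloorU : Tendsto (fun n : ℕ => (⌊δ * (((n + k n : ℕ)) : ℝ)⌋₊ : ℝ) / n) atTop
        (nhds (δ * (1 + α))) := aux_floor_div δ hδ0.le (fun n => n + k n) (1 + α) hNk
    have hle1 : ∀ᶠ n in atTop, δseq n ≤ ⌊δ * (((n + k n : ℕ)) : ℝ)⌋₊ := by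
      have hlt' : δ < δ * (1 + α) := by nlinarith
      filter_upwards [htend.eventually_lt hfloorU hlt', eventually_ge_atTop 1] with n h hn
      have hn' : (0:ℝ) < n := by exact_mod_cast hn
      have := (div_lt_div_iff_of_pos_right hn').mp h
      exact_mod_cast this.le
    set r : ℕ → ℕ := fun n => ⌊δ * (((n + k n : ℕ)) : ℝ)⌋₊ - δseq n with hrdef
    have hrcast : ∀ᶠ n in atTop,
        (r n : ℝ) = (⌊δ * (((n + k n : ℕ)) : ℝ)⌋₊ : ℝ) - (δseq n : ℝ) := by
      filter_upwards [hle1] with n h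
      exact Nat.cast_sub h
    have hrdivn : Tendsto (fun n : ℕ => (r n : ℝ) / n) atTop (nhds (δ * (1 + α) - δ)) := by
      refine Tendsto.congr' ?_ (hfloorU.sub htend)
      filter_upwards [hrcast] with n h
      rw [h, sub_div]
    have hrk : Tendsto (fun n : ℕ => (r n : ℝ) / (k n : ℝ)) atTop (nhds δ) := by
      have hdiv := hrdivn.div hkdiv (ne_of_gt hα0)
      have heq : (δ * (1 + α) - δ) / α = δ := by field_simp; ring
      rw [heq] at hdiv
      refine Tendsto.congr' ?_ hdiv
      filter_upwards [eventually_ge_atTop 1] with n hn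
      have hn' : ((n:ℝ)) ≠ 0 := by positivity
      have hk' : ((k n : ℝ)) ≠ 0 := by
        have := hk1 n hn
        exact_mod_cast Nat.one_le_iff_ne_zero.mp this
      simp only [Pi.div_apply]
      field_simp
    have hAr : ∀ᶠ n in atTop, A (k n) ≤ r n := by
      have h1 : Tendsto (fun n : ℕ => (A (k n) : ℝ) / (k n : ℝ)) atTop (nhds εm) :=
        hεm.comp hkTop
      filter_upwards [h1.eventually_lt hrk hmδ, eventually_ge_atTop 1] with n h hn
      have hk' : (0:ℝ) < (k n : ℝ) := by exact_mod_cast hk1 n hn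
      have := (div_lt_div_iff_of_pos_right hk').mp h
      exact_mod_cast this.le
    have hBr : ∀ᶠ n in atTop, r n ≤ B (k n) := by
      have h1 : Tendsto (fun n : ℕ => (B (k n) : ℝ) / (k n : ℝ)) atTop (nhds εM) :=
        hεM.comp hkTop
      filter_upwards [hrk.eventually_lt h1 hδM, eventually_ge_atTop 1] with n h hn
      have hk' : (0:ℝ) < (k n : ℝ) := by exact_mod_cast hk1 n hn
      have := (div_lt_div_iff_of_pos_right hk').mp h
      exact_mod_cast this.le
    have hupper : ∀ᶠ n in atTop,
        f n ≤ ((((n + k n : ℕ)) : ℝ) / n) * a (n + k n) := by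
      filter_upwards [hle1, hAr, hBr, eventually_ge_atTop 1, eventually_ge_atTop N₀]
        with n h1 h2 h3 hn1 hnN
      have hk1' := hk1 n hn1
      have hpr : 1 ≤ p (k n) (r n) := hpos _ hk1' _ h2 h3
      have hpn : 1 ≤ p n (δseq n) := hpδ n hn1 hnN
      have hsum : δseq n + r n = ⌊δ * (((n + k n : ℕ)) : ℝ)⌋₊ := by
        have hr' : r n = ⌊δ * (((n + k n : ℕ)) : ℝ)⌋₊ - δseq n := rfl
        omega
      have hle : p n (δseq n) ≤ p (n + k n) ⌊δ * (((n + k n : ℕ)) : ℝ)⌋₊ := by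
        calc p n (δseq n) = p n (δseq n) * 1 := (mul_one _).symm
          _ ≤ p n (δseq n) * p (k n) (r n) := Nat.mul_le_mul_left _ hpr
          _ ≤ p (n + k n) (δseq n + r n) := hsuper n (k n) hn1 hk1' _ _
          _ = p (n + k n) ⌊δ * (((n + k n : ℕ)) : ℝ)⌋₊ := by rw [hsum]
      have hppos : (0:ℝ) < (p n (δseq n) : ℝ) := by exact_mod_cast hpn
      have hlog : Real.log (p n (δseq n)) ≤
          Real.log (p (n + k n) ⌊δ * (((n + k n : ℕ)) : ℝ)⌋₊) :=
        Real.log_le_log hppos (by exact_mod_cast hle)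
      have hn' : (0:ℝ) < n := by exact_mod_cast hn1
      have hnk' : (0:ℝ) < ((n + k n : ℕ) : ℝ) := by
        have : (1:ℕ) ≤ n + k n := le_trans hn1 (Nat.le_add_right _ _)
        exact_mod_cast this
      have hre : ((((n + k n : ℕ)) : ℝ) / n) * a (n + k n)
          = Real.log (p (n + k n) ⌊δ * (((n + k n : ℕ)) : ℝ)⌋₊) / n := by
        simp only [hadef]
        field_simp
      rw [hre]
      show Real.log (p n (δseq n)) / (n:ℝ) ≤ _
      gcongr
    have hgU : Tendsto (fun n : ℕ => ((((n + k n : ℕ)) : ℝ) / n) * a (n + k n)) atTop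
        (nhds ((1 + α) * L)) := hNk.mul (ha.comp hNkTop)
    have h_up : limsup f atTop ≤ (1+α)*L := by
      have hcb : IsCoboundedUnder (· ≤ ·) atTop f :=
        (isBoundedUnder_of_eventually_ge hf0).isCoboundedUnder_le
      have hbd : IsBoundedUnder (· ≤ ·) atTop
          (fun n : ℕ => ((((n + k n : ℕ)) : ℝ) / n) * a (n + k n)) :=
        hgU.isBoundedUnder_le
      have := limsup_le_limsup hupper hcb hbd
      rwa [hgU.limsup_eq] at this
    -- ===================== LOWER BOUND =====================
    set m : ℕ → ℕ := fun n => n - k n with hmdef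
    have hmcast : ∀ n : ℕ, ((m n : ℕ) : ℝ) = (n : ℝ) - (k n : ℝ) := by
      intro n
      rw [hmdef]
      push_cast [Nat.cast_sub (hkn n)]
      ring
    have hmdiv : Tendsto (fun n : ℕ => ((m n : ℕ) : ℝ) / n) atTop (nhds (1 - α)) := by
      refine Tendsto.congr' ?_ (hid.sub hkdiv)
      filter_upwards [eventually_ge_atTop 1] with n hn
      rw [hmcast n, sub_div]
    have hmTop : Tendsto m atTop atTop := by
      rw [← tendsto_natCast_atTop_iff (R := ℝ)]
      have hb : Tendsto (fun n : ℕ => (1 - α) * (n:ℝ) + (-1)) atTop atTop :=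
        ((tendsto_natCast_atTop_atTop (R := ℝ)).const_mul_atTop
          (by linarith : (0:ℝ) < 1 - α)).atTop_add tendsto_const_nhds
      refine tendsto_atTop_mono' atTop ?_ hb
      filter_upwards [] with n
      have h1 : (k n : ℝ) < α * n + 1 := Nat.ceil_lt_add_one (by positivity)
      rw [hmcast n]
      nlinarith [h1]
    have hmdiv' : Tendsto (fun n : ℕ => ((m n : ℕ) : ℝ)) atTop atTop :=
      tendsto_natCast_atTop_iff.mpr hmTop
    have ham : Tendsto (fun n : ℕ => a (m n)) atTop (nhds L) := ha.comp hmTop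
    have hfloorL : Tendsto (fun n : ℕ => (⌊δ * ((m n : ℕ) : ℝ)⌋₊ : ℝ) / n) atTop
        (nhds (δ * (1 - α))) := aux_floor_div δ hδ0.le m (1 - α) hmdiv
    have hle2 : ∀ᶠ n in atTop, ⌊δ * ((m n : ℕ) : ℝ)⌋₊ ≤ δseq n := by
      have hlt' : δ * (1 - α) < δ := by nlinarith
      filter_upwards [hfloorL.eventually_lt htend hlt', eventually_ge_atTop 1] with n h hn
      have hn' : (0:ℝ) < n := by exact_mod_cast hn
      have := (div_lt_div_iff_of_pos_right hn').mp h
      exact_mod_cast this.le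
    set s : ℕ → ℕ := fun n => δseq n - ⌊δ * ((m n : ℕ) : ℝ)⌋₊ with hsdef
    have hscast : ∀ᶠ n in atTop,
        (s n : ℝ) = (δseq n : ℝ) - (⌊δ * ((m n : ℕ) : ℝ)⌋₊ : ℝ) := by
      filter_upwards [hle2] with n h
      exact Nat.cast_sub h
    have hsdivn : Tendsto (fun n : ℕ => (s n : ℝ) / n) atTop (nhds (δ - δ * (1 - α))) := by
      refine Tendsto.congr' ?_ (htend.sub hfloorL)
      filter_upwards [hscast] with n h
      rw [h, sub_div]
    have hsk : Tendsto (fun n : ℕ => (s n : ℝ) / (k n : ℝ)) atTop (nhds δ) := by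
      have hdiv := hsdivn.div hkdiv (ne_of_gt hα0)
      have heq : (δ - δ * (1 - α)) / α = δ := by field_simp; ring
      rw [heq] at hdiv
      refine Tendsto.congr' ?_ hdiv
      filter_upwards [eventually_ge_atTop 1] with n hn
      have hn' : ((n:ℝ)) ≠ 0 := by positivity
      have hk' : ((k n : ℝ)) ≠ 0 := by
        have := hk1 n hn
        exact_mod_cast Nat.one_le_iff_ne_zero.mp this
      simp only [Pi.div_apply]
      field_simp
    have hAs : ∀ᶠ n in atTop, A (k n) ≤ s n := by
      have h1 : Tendsto (fun n : ℕ => (A (k n) : ℝ) / (k n : ℝ)) atTop (nhds εm) :=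
        hεm.comp hkTop
      filter_upwards [h1.eventually_lt hsk hmδ, eventually_ge_atTop 1] with n h hn
      have hk' : (0:ℝ) < (k n : ℝ) := by exact_mod_cast hk1 n hn
      have := (div_lt_div_iff_of_pos_right hk').mp h
      exact_mod_cast this.le
    have hBs : ∀ᶠ n in atTop, s n ≤ B (k n) := by
      have h1 : Tendsto (fun n : ℕ => (B (k n) : ℝ) / (k n : ℝ)) atTop (nhds εM) :=
        hεM.comp hkTop
      filter_upwards [hsk.eventually_lt h1 hδM, eventually_ge_atTop 1] with n h hn
      have hk' : (0:ℝ) < (k n : ℝ) := by exact_mod_cast hk1 n hn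
      have := (div_lt_div_iff_of_pos_right hk').mp h
      exact_mod_cast this.le
    -- the middle factor p (m n) ⌊δ m n⌋ is positive eventually
    have hfloorm : Tendsto (fun n : ℕ => (⌊δ * ((m n : ℕ) : ℝ)⌋₊ : ℝ) / (m n : ℝ)) atTop
        (nhds δ) := hfloorbase.comp hmTop
    have hAm : ∀ᶠ n in atTop, A (m n) ≤ ⌊δ * ((m n : ℕ) : ℝ)⌋₊ := by
      have h1 : Tendsto (fun n : ℕ => (A (m n) : ℝ) / (m n : ℝ)) atTop (nhds εm) :=
        hεm.comp hmTop
      filter_upwards [h1.eventually_lt hfloorm hmδ, hmTop.eventually_ge_atTop 1] with n h hn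
      have hm' : (0:ℝ) < (m n : ℝ) := by exact_mod_cast hn
      have := (div_lt_div_iff_of_pos_right hm').mp h
      exact_mod_cast this.le
    have hBm : ∀ᶠ n in atTop, ⌊δ * ((m n : ℕ) : ℝ)⌋₊ ≤ B (m n) := by
      have h1 : Tendsto (fun n : ℕ => (B (m n) : ℝ) / (m n : ℝ)) atTop (nhds εM) :=
        hεM.comp hmTop
      filter_upwards [hfloorm.eventually_lt h1 hδM, hmTop.eventually_ge_atTop 1] with n h hn
      have hm' : (0:ℝ) < (m n : ℝ) := by exact_mod_cast hn
      have := (div_lt_div_iff_of_pos_right hm').mp h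
      exact_mod_cast this.le
    have hlower : ∀ᶠ n in atTop,
        (((m n : ℕ) : ℝ) / n) * a (m n) ≤ f n := by
      filter_upwards [hle2, hAs, hBs, hAm, hBm, hmTop.eventually_ge_atTop 1,
        eventually_ge_atTop 1, eventually_ge_atTop N₀] with n h1 h2 h3 h4 h5 hm1 hn1 hnN
      have hk1' := hk1 n hn1
      have hps : 1 ≤ p (k n) (s n) := hpos _ hk1' _ h2 h3
      have hpm : 1 ≤ p (m n) ⌊δ * ((m n : ℕ) : ℝ)⌋₊ := hpos _ hm1 _ h4 h5
      have hsum : ⌊δ * ((m n : ℕ) : ℝ)⌋₊ + s n = δseq n := by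
        have hs' : s n = δseq n - ⌊δ * ((m n : ℕ) : ℝ)⌋₊ := rfl
        omega
      have hmk : m n + k n = n := by
        rw [hmdef]; exact Nat.sub_add_cancel (hkn n)
      have hle : p (m n) ⌊δ * ((m n : ℕ) : ℝ)⌋₊ ≤ p n (δseq n) := by
        calc p (m n) ⌊δ * ((m n : ℕ) : ℝ)⌋₊
            = p (m n) ⌊δ * ((m n : ℕ) : ℝ)⌋₊ * 1 := (mul_one _).symm
          _ ≤ p (m n) ⌊δ * ((m n : ℕ) : ℝ)⌋₊ * p (k n) (s n) :=
              Nat.mul_le_mul_left _ hps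
          _ ≤ p (m n + k n) (⌊δ * ((m n : ℕ) : ℝ)⌋₊ + s n) :=
              hsuper (m n) (k n) hm1 hk1' _ _
          _ = p n (δseq n) := by rw [hsum, hmk]
      have hppos : (0:ℝ) < (p (m n) ⌊δ * ((m n : ℕ) : ℝ)⌋₊ : ℝ) := by exact_mod_cast hpm
      have hlog : Real.log (p (m n) ⌊δ * ((m n : ℕ) : ℝ)⌋₊) ≤ Real.log (p n (δseq n)) :=
        Real.log_le_log hppos (by exact_mod_cast hle)
      have hn' : (0:ℝ) < n := by exact_mod_cast hn1
      have hm' : (0:ℝ) < (m n : ℝ) := by exact_mod_cast hm1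
      have hre : (((m n : ℕ) : ℝ) / n) * a (m n)
          = Real.log (p (m n) ⌊δ * ((m n : ℕ) : ℝ)⌋₊) / n := by
        simp only [hadef]
        field_simp
      rw [hre]
      show _ ≤ Real.log (p n (δseq n)) / (n:ℝ)
      gcongr
    have hgL : Tendsto (fun n : ℕ => (((m n : ℕ) : ℝ) / n) * a (m n)) atTop
        (nhds ((1 - α) * L)) := hmdiv.mul ham
    have h_low : (1-α)*L ≤ liminf f atTop := by
      have hcb : IsCoboundedUnder (· ≥ ·) atTop f :=
        (isBoundedUnder_of_eventually_le hfK).isCoboundedUnder_ge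
      have hbd : IsBoundedUnder (· ≥ ·) atTop
          (fun n : ℕ => (((m n : ℕ) : ℝ) / n) * a (m n)) :=
        hgL.isBoundedUnder_ge
      have := liminf_le_liminf hlower hbd hcb
      rwa [hgL.liminf_eq] at this
    exact ⟨h_up, h_low⟩
  -- ===================== CONCLUSION =====================
  have hαseq : ∀ j : ℕ, 0 < (1:ℝ)/(j+3) ∧ (1:ℝ)/(j+3) < 1/2 := by
    intro j
    constructor
    · positivity
    · rw [div_lt_div_iff₀ (by positivity) (by norm_num)]
      have : (0:ℝ) ≤ (j:ℝ) := by positivity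
      linarith
  have hαtend : Tendsto (fun j : ℕ => (1:ℝ)/((j:ℝ)+3)) atTop (nhds 0) := by
    have h1 : Tendsto (fun j : ℕ => ((j:ℝ)+3)) atTop atTop :=
      (tendsto_natCast_atTop_atTop (R := ℝ)).atTop_add tendsto_const_nhds
    simpa [one_div, Pi.inv_def] using h1.inv_tendsto_atTop
  have hsup : limsup f atTop ≤ L := by
    have hseq : Tendsto (fun j : ℕ => (1 + (1:ℝ)/((j:ℝ)+3)) * L) atTop (nhds L) := by
      have := ((tendsto_const_nhds (x := (1:ℝ)) (f := atTop (α := ℕ))).add hαtend).mul_const L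
      simpa using this
    refine ge_of_tendsto hseq ?_
    filter_upwards [] with j
    exact (key (1/((j:ℝ)+3)) (hαseq j).1 (hαseq j).2).1
  have hinf : L ≤ liminf f atTop := by
    have hseq : Tendsto (fun j : ℕ => (1 - (1:ℝ)/((j:ℝ)+3)) * L) atTop (nhds L) := by
      have := ((tendsto_const_nhds (x := (1:ℝ)) (f := atTop (α := ℕ))).sub hαtend).mul_const L
      simpa using this
    refine le_of_tendsto hseq ?_
    filter_upwards [] with j
    exact (key (1/((j:ℝ)+3)) (hαseq j).1 (hαseq j).2).2
  exact tendsto_of_le_liminf_of_limsup_le hinf hsup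
    (isBoundedUnder_of_eventually_le hfK) (isBoundedUnder_of_eventually_ge hf0)
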